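/- For N ≥ 7, the vector (x_k^s, y_k^s) = Σ_{i=0}^{k−2} A^i (1,0)ᵀ, where A = [[1,1],[N−6,N−5]], has closed form x_k^s = 1 + (Φ₁^{2k−4} − Φ₂^{2k−4})/√((N−6)(N−2)) and y_k^s = −1 + (Φ₁^{2k−3} − Φ₂^{2k−3})/√(N−2) for all k ≥ 2. -/

import Mathlib

theorem stmt_10 (N : ℕ) (hN : 7 ≤ N)
    (Phi1 Phi2 : ℝ)
    (h1 : Phi1 = (Real.sqrt ((N : ℝ) - 6) + Real.sqrt ((N : ℝ) - 2)) / 2)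
    (h2 : Phi2 = (Real.sqrt ((N : ℝ) - 6) - Real.sqrt ((N : ℝ) - 2)) / 2)
    (A : Matrix (Fin 2) (Fin 2) ℝ)
    (hA : A = !![1, 1; (N : ℝ) - 6, (N : ℝ) - 5])
    (v : ℕ → Fin 2 → ℝ)
    (hv : ∀ k : ℕ, v k = ∑ i ∈ Finset.range (k - 1), (A ^ i).mulVec ![1, 0]) :
    ∀ k : ℕ, 2 ≤ k →
      v k 0 = 1 + (Phi1 ^ (2 * k - 4) - Phi2 ^ (2 * k - 4)) /
          Real.sqrt (((N : ℝ) - 6) * ((N : ℝ) - 2)) ∧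
      v k 1 = -1 + (Phi1 ^ (2 * k - 3) - Phi2 ^ (2 * k - 3)) / Real.sqrt ((N : ℝ) - 2) := by
  have hN' : (7 : ℝ) ≤ (N : ℝ) := by exact_mod_cast hN
  set s := Real.sqrt ((N : ℝ) - 6) with hs
  set t := Real.sqrt ((N : ℝ) - 2) with ht
  have hs2 : s ^ 2 = (N : ℝ) - 6 := Real.sq_sqrt (by linarith)
  have ht2 : t ^ 2 = (N : ℝ) - 2 := Real.sq_sqrt (by linarith)
  have hspos : 0 < s := Real.sqrt_pos.mpr (by linarith)
  have htpos : 0 < t := Real.sqrt_pos.mpr (by linarith)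
  have hst : Real.sqrt (((N : ℝ) - 6) * ((N : ℝ) - 2)) = s * t :=
    Real.sqrt_mul (by linarith) _
  have hP1 : Phi1 ^ 2 = s * Phi1 + 1 := by
    rw [h1]; linear_combination (1/4 : ℝ) * ht2 - (1/4 : ℝ) * hs2
  have hP2 : Phi2 ^ 2 = s * Phi2 + 1 := by
    rw [h2]; linear_combination (1/4 : ℝ) * ht2 - (1/4 : ℝ) * hs2
  have hdiff : Phi1 - Phi2 = t := by rw [h1, h2]; ring
  -- recurrence
  have hrec : ∀ j : ℕ, v (j + 3) = A.mulVec (v (j + 2)) + ![1, 0] := by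
    intro j
    rw [hv, hv]
    show ∑ i ∈ Finset.range (j + 2), (A ^ i).mulVec ![1, 0] = _
    rw [Finset.sum_range_succ']
    simp only [pow_zero, Matrix.one_mulVec, pow_succ']
    have hsum : A.mulVec (∑ i ∈ Finset.range (j + 2 - 1), (A ^ i).mulVec ![1, 0])
        = ∑ i ∈ Finset.range (j + 1), (A * A ^ i).mulVec ![1, 0] := by
      rw [← Matrix.mulVecLin_apply, map_sum]
      simp only [Matrix.mulVecLin_apply, Matrix.mulVec_mulVec, show j + 2 - 1 = j + 1 by omega]
    rw [hsum]
  have key : ∀ j : ℕ, v (j + 2) 0 = 1 + (Phi1 ^ (2 * j) - Phi2 ^ (2 * j)) / (s * t) ∧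
      v (j + 2) 1 = -1 + (Phi1 ^ (2 * j + 1) - Phi2 ^ (2 * j + 1)) / t := by
    intro j
    induction j with
    | zero =>
        have : v 2 = ![1, 0] := by
          rw [hv]; simp
        rw [this]
        constructor
        · simp
        · simp [pow_one, hdiff]
          field_simp
          norm_num
    | succ n ih =>
        obtain ⟨ih0, ih1⟩ := ih
        have h3 : n + 1 + 2 = n + 3 := by ring
        rw [h3, hrec n]
        have e0 : A.mulVec (v (n + 2)) 0
            = v (n + 2) 0 + v (n + 2) 1 := by
          simp [hA, Matrix.mulVec, dotProduct, Fin.sum_univ_two, Matrix.vecHead, Matrix.vecTail]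
        have e1' : A.mulVec (v (n + 2)) 1
            = ((N : ℝ) - 6) * v (n + 2) 0 + ((N : ℝ) - 5) * v (n + 2) 1 := by
          simp [hA, Matrix.mulVec, dotProduct, Fin.sum_univ_two, Matrix.vecHead, Matrix.vecTail]
        constructor
        · rw [Pi.add_apply, e0, ih0, ih1]
          simp only [Matrix.cons_val_zero]
          have hexp : 2 * (n + 1) = 2 * n + 2 := by ring
          rw [hexp]
          have : Phi1 ^ (2 * n + 2) = Phi1 ^ (2 * n) * (s * Phi1 + 1) := by
            rw [← hP1]; ring
          rw [this]
          have : Phi2 ^ (2 * n + 2) = Phi2 ^ (2 * n) * (s * Phi2 + 1) := by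
            rw [← hP2]; ring
          rw [this]
          field_simp
          ring
        · rw [Pi.add_apply, e1', ih0, ih1]
          simp only [Matrix.cons_val_one, Matrix.head_cons, Matrix.cons_val_zero]
          have hexp : 2 * (n + 1) + 1 = 2 * n + 3 := by ring
          rw [hexp]
          have h13 : Phi1 ^ (2 * n + 3) = Phi1 ^ (2 * n) * ((s ^ 2 + 1) * Phi1 + s) := by
            have : Phi1 ^ 3 = (s ^ 2 + 1) * Phi1 + s := by linear_combination (Phi1 + s) * hP1
            rw [show 2 * n + 3 = 2 * n + 3 from rfl, pow_add, this]
          have h23 : Phi2 ^ (2 * n + 3) = Phi2 ^ (2 * n) * ((s ^ 2 + 1) * Phi2 + s) := by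
            have : Phi2 ^ 3 = (s ^ 2 + 1) * Phi2 + s := by linear_combination (Phi2 + s) * hP2
            rw [pow_add, this]
          rw [h13, h23, show ((N : ℝ) - 6) = s ^ 2 from hs2.symm,
            show ((N : ℝ) - 5) = s ^ 2 + 1 from by linarith [hs2]]
          have hP1' : Phi1 ^ (2 * n + 1) = Phi1 ^ (2 * n) * Phi1 := by ring
          have hP2' : Phi2 ^ (2 * n + 1) = Phi2 ^ (2 * n) * Phi2 := by ring
          rw [hP1', hP2']
          field_simp
          ring
  intro k hk
  obtain ⟨j, rfl⟩ : ∃ j, k = j + 2 := ⟨k - 2, by omega⟩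
  have hk4 : 2 * (j + 2) - 4 = 2 * j := by omega
  have hk3 : 2 * (j + 2) - 3 = 2 * j + 1 := by omega
  rw [hk4, hk3, hst]
  exact key j
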